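/- Let n ≥ 3 and let π ∈ S_n. Then π avoids both the pattern 213 and the pattern 312, π² avoids the consecutive pattern 213, and π(1) = 1, if and only if π = 1 ⊕ σ for some σ ∈ S_{n−1} such that σ avoids both 213 and 312 and σ² avoids the consecutive pattern 213. -/

import Mathlib

/-- `π` contains the (classical) pattern `σ`: there is a strictly increasing
sequence of positions on which `π` is order isomorphic to `σ`. -/
def ContainsPat {n k : ℕ} (π : Equiv.Perm (Fin n)) (σ : Equiv.Perm (Fin k)) : Prop :=
  ∃ f : Fin k → Fin n, StrictMono f ∧ ∀ a b : Fin k, σ a < σ b ↔ π (f a) < π (f b)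

/-- `π` avoids the pattern `σ`. -/
def AvoidsPat {n k : ℕ} (π : Equiv.Perm (Fin n)) (σ : Equiv.Perm (Fin k)) : Prop :=
  ¬ ContainsPat π σ

/-- `π` contains the consecutive pattern `σ`: some `k` consecutive positions of `π`
carry values order isomorphic to `σ`. -/
def ContainsConsecPat {n k : ℕ} (π : Equiv.Perm (Fin n)) (σ : Equiv.Perm (Fin k)) : Prop :=
  ∃ (i : ℕ) (h : i + k ≤ n), ∀ a b : Fin k,
    σ a < σ b ↔ π ⟨i + a.val, by have := a.isLt; omega⟩ < π ⟨i + b.val, by have := b.isLt; omega⟩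

/-- `π` avoids the consecutive pattern `σ`. -/
def AvoidsConsecPat {n k : ℕ} (π : Equiv.Perm (Fin n)) (σ : Equiv.Perm (Fin k)) : Prop :=
  ¬ ContainsConsecPat π σ

/-- the pattern 231 (0-indexed: 0 ↦ 1, 1 ↦ 2, 2 ↦ 0) -/
def p231 : Equiv.Perm (Fin 3) := c[0, 1, 2]

/-- the pattern 312 (0-indexed: 0 ↦ 2, 1 ↦ 0, 2 ↦ 1) -/
def p312 : Equiv.Perm (Fin 3) := c[0, 2, 1]

/-- the pattern 213 (0-indexed: 0 ↦ 1, 1 ↦ 0, 2 ↦ 2) -/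
def p213 : Equiv.Perm (Fin 3) := c[0, 1]

/-- the pattern 1432 (0-indexed: 0 ↦ 0, 1 ↦ 3, 2 ↦ 2, 3 ↦ 1) -/
def p1432 : Equiv.Perm (Fin 4) := c[1, 3]

/-- direct sum of two permutations -/
def dsum {k m : ℕ} (σ : Equiv.Perm (Fin k)) (τ : Equiv.Perm (Fin m)) :
    Equiv.Perm (Fin (k + m)) :=
  finSumFinEquiv.symm.trans ((Equiv.sumCongr σ τ).trans finSumFinEquiv)

/-- the Lucas numbers: L₁ = 1, L₂ = 3, L_m = L_{m-1} + L_{m-2} -/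
def lucas : ℕ → ℕ
  | 0 => 2
  | 1 => 1
  | n + 2 => lucas (n + 1) + lucas n

/-- for n ≥ 3, π ∈ S_n avoids 213 and 312, π² avoids the consecutive
pattern 213 and π(1) = 1, iff π = 1 ⊕ σ for some σ ∈ S_{n−1} avoiding 213 and 312
with σ² avoiding the consecutive pattern 213. -/
lemma dsum0 {m : ℕ} (σ : Equiv.Perm (Fin m)) :
    dsum (1 : Equiv.Perm (Fin 1)) σ ⟨0, by omega⟩ = ⟨0, by omega⟩ := by
  have : (⟨0, by omega⟩ : Fin (1+m)) = Fin.castAdd m 0 := rfl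
  rw [this]
  simp [dsum, finSumFinEquiv, Fin.addCases_left]

lemma dsumS {m : ℕ} (σ : Equiv.Perm (Fin m)) (i : Fin m) :
    dsum (1 : Equiv.Perm (Fin 1)) σ ⟨i.val + 1, by omega⟩ = ⟨(σ i).val + 1, by omega⟩ := by
  have : (⟨i.val + 1, by omega⟩ : Fin (1+m)) = Fin.natAdd 1 i := by
    ext; simp [Nat.add_comm]
  rw [this]
  simp [dsum, finSumFinEquiv, Fin.addCases_right]
  ext; simp [Nat.add_comm]

lemma pc0 {n m : ℕ} (h : 1 + m = n) (σ : Equiv.Perm (Fin m)) :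
    ((finCongr h).permCongr (dsum (1 : Equiv.Perm (Fin 1)) σ)) ⟨0, by omega⟩
      = ⟨0, by omega⟩ := by
  have e : (finCongr h).symm ⟨0, by omega⟩ = (⟨0, by omega⟩ : Fin (1+m)) := rfl
  simp only [Equiv.permCongr_apply, e, dsum0]
  rfl

lemma pcS {n m : ℕ} (h : 1 + m = n) (σ : Equiv.Perm (Fin m)) (i : Fin m) :
    ((finCongr h).permCongr (dsum (1 : Equiv.Perm (Fin 1)) σ)) ⟨i.val + 1, by omega⟩
      = ⟨(σ i).val + 1, by omega⟩ := by
  have e : (finCongr h).symm ⟨i.val + 1, by omega⟩ = (⟨i.val + 1, by omega⟩ : Fin (1+m)) := rfl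
  simp only [Equiv.permCongr_apply, e, dsumS]
  rfl

lemma key {n m : ℕ} (h : 1 + m = n) (ρ : Equiv.Perm (Fin n)) (τ : Equiv.Perm (Fin m))
    (h0 : ρ ⟨0, by omega⟩ = ⟨0, by omega⟩)
    (hS : ∀ i : Fin m, ρ ⟨i.val + 1, by omega⟩ = ⟨(τ i).val + 1, by omega⟩)
    (p : Equiv.Perm (Fin 3)) (hp : p 1 < p 0) :
    ContainsPat ρ p ↔ ContainsPat τ p := by
  constructor
  · rintro ⟨f, hmono, hf⟩
    have hge : ∀ a : Fin 3, 1 ≤ (f a).val := by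
      intro a
      by_contra hlt
      push_neg at hlt
      have hf0 : f 0 ≤ f a := hmono.monotone (Fin.zero_le a)
      have h00 : (f 0).val = 0 := by
        have : (f 0).val ≤ (f a).val := hf0
        omega
      have hfe : f 0 = ⟨0, by omega⟩ := Fin.ext h00
      have h10 : ρ (f 1) < ρ (f 0) := (hf 1 0).mp hp
      rw [hfe, h0] at h10
      rw [Fin.lt_def] at h10
      exact absurd h10 (by simp)
    have hglt : ∀ a : Fin 3, (f a).val - 1 < m := by
      intro a; have := (f a).isLt; have := hge a; omega
    set g : Fin 3 → Fin m := fun a => ⟨(f a).val - 1, hglt a⟩ with hg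
    have hvg : ∀ a : Fin 3, (ρ (f a)).val = (τ (g a)).val + 1 := by
      intro a
      have e1 : f a = ⟨(g a).val + 1, by have := hglt a; omega⟩ :=
        Fin.ext (by show (f a).val = (f a).val - 1 + 1; have := hge a; omega)
      rw [e1, hS (g a)]
    refine ⟨g, ?_, ?_⟩
    · intro a b hab
      have h1 := hmono hab
      have h2 := hge a
      simp only [Fin.lt_def] at h1 ⊢
      show (f a).val - 1 < (f b).val - 1
      omega
    · intro a b
      rw [hf a b]
      simp only [Fin.lt_def]
      have va := hvg a
      have vb := hvg b
      omega
  · rintro ⟨f, hmono, hf⟩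
    refine ⟨fun a => ⟨(f a).val + 1, by have := (f a).isLt; omega⟩, ?_, ?_⟩
    · intro a b hab
      have h1 := hmono hab
      simp only [Fin.lt_def] at h1 ⊢
      omega
    · intro a b
      rw [hf a b]
      simp only [Fin.lt_def]
      have va := congrArg Fin.val (hS (f a))
      have vb := congrArg Fin.val (hS (f b))
      simp only [Fin.val_mk] at va vb ⊢
      omega

lemma keyc {n m : ℕ} (h : 1 + m = n) (ρ : Equiv.Perm (Fin n)) (τ : Equiv.Perm (Fin m))
    (h0 : ρ ⟨0, by omega⟩ = ⟨0, by omega⟩)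
    (hS : ∀ i : Fin m, ρ ⟨i.val + 1, by omega⟩ = ⟨(τ i).val + 1, by omega⟩)
    (p : Equiv.Perm (Fin 3)) (hp : p 1 < p 0) :
    ContainsConsecPat ρ p ↔ ContainsConsecPat τ p := by
  constructor
  · rintro ⟨i, hi, hocc⟩
    have hi1 : 1 ≤ i := by
      by_contra hlt
      push_neg at hlt
      have hiz : i = 0 := by omega
      subst hiz
      have h10 : ρ ⟨0 + (1:Fin 3).val, by omega⟩ < ρ ⟨0 + (0:Fin 3).val, by omega⟩ :=
        (hocc 1 0).mp hp
      have e0 : (⟨0 + (0:Fin 3).val, by omega⟩ : Fin n) = ⟨0, by omega⟩ := Fin.ext rfl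
      rw [e0, h0] at h10
      rw [Fin.lt_def] at h10
      exact absurd h10 (by simp)
    refine ⟨i - 1, by omega, ?_⟩
    intro a b
    rw [hocc a b]
    simp only [Fin.lt_def]
    have hv : ∀ c : Fin 3, (ρ ⟨i + c.val, by have := c.isLt; omega⟩).val
        = (τ ⟨i - 1 + c.val, by have := c.isLt; omega⟩).val + 1 := by
      intro c
      have e1 : (⟨i + c.val, by have := c.isLt; omega⟩ : Fin n)
          = ⟨(i - 1 + c.val) + 1, by have := c.isLt; omega⟩ :=
        Fin.ext (by show i + c.val = i - 1 + c.val + 1; omega)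
      rw [e1]
      exact congrArg Fin.val (hS ⟨i - 1 + c.val, by have := c.isLt; omega⟩)
    have va := hv a
    have vb := hv b
    omega
  · rintro ⟨i, hi, hocc⟩
    refine ⟨i + 1, by omega, ?_⟩
    intro a b
    rw [hocc a b]
    simp only [Fin.lt_def]
    have hv : ∀ c : Fin 3, (ρ ⟨i + 1 + c.val, by have := c.isLt; omega⟩).val
        = (τ ⟨i + c.val, by have := c.isLt; omega⟩).val + 1 := by
      intro c
      have e1 : (⟨i + 1 + c.val, by have := c.isLt; omega⟩ : Fin n)
          = ⟨(i + c.val) + 1, by have := c.isLt; omega⟩ :=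
        Fin.ext (by show i + 1 + c.val = i + c.val + 1; omega)
      rw [e1]
      exact congrArg Fin.val (hS ⟨i + c.val, by have := c.isLt; omega⟩)
    have va := hv a
    have vb := hv b
    omega

lemma sq0 {n : ℕ} (hn : 0 < n) (ρ : Equiv.Perm (Fin n))
    (h0 : ρ ⟨0, by omega⟩ = ⟨0, by omega⟩) :
    (ρ ^ 2) ⟨0, by omega⟩ = ⟨0, by omega⟩ := by
  rw [pow_two, Equiv.Perm.mul_apply, h0, h0]

lemma sqS {n m : ℕ} (h : 1 + m = n) (ρ : Equiv.Perm (Fin n)) (τ : Equiv.Perm (Fin m))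
    (hS : ∀ i : Fin m, ρ ⟨i.val + 1, by omega⟩ = ⟨(τ i).val + 1, by omega⟩) (i : Fin m) :
    (ρ ^ 2) ⟨i.val + 1, by omega⟩ = ⟨((τ ^ 2) i).val + 1, by omega⟩ := by
  rw [pow_two, Equiv.Perm.mul_apply, hS i, hS (τ i)]
  apply Fin.ext
  simp [pow_two]

theorem stmt9 (n : ℕ) (hn : 3 ≤ n) (π : Equiv.Perm (Fin n)) :
    (AvoidsPat π p213 ∧ AvoidsPat π p312 ∧ AvoidsConsecPat (π ^ 2) p213 ∧
        π ⟨0, by omega⟩ = ⟨0, by omega⟩) ↔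
      ∃ σ : Equiv.Perm (Fin (n - 1)),
        AvoidsPat σ p213 ∧ AvoidsPat σ p312 ∧ AvoidsConsecPat (σ ^ 2) p213 ∧
        π = (finCongr (by omega : 1 + (n - 1) = n)).permCongr
              (dsum (1 : Equiv.Perm (Fin 1)) σ) := by
  have h1 : 1 + (n - 1) = n := by omega
  have hp213 : p213 1 < p213 0 := by decide
  have hp312 : p312 1 < p312 0 := by decide
  constructor
  · rintro ⟨ha, hb, hc, hd⟩
    have hne : ∀ i : Fin (n - 1), 1 ≤ (π ⟨i.val + 1, by omega⟩).val := by
      intro i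
      by_contra hlt
      push_neg at hlt
      have hv0 : π ⟨i.val + 1, by omega⟩ = ⟨0, by omega⟩ := Fin.ext (by show (π ⟨i.val + 1, by omega⟩).val = 0; omega)
      have := π.injective (hv0.trans hd.symm)
      have := congrArg Fin.val this
      simp at this
    set F : Fin (n - 1) → Fin (n - 1) :=
      fun i => ⟨(π ⟨i.val + 1, by omega⟩).val - 1, by
        have := (π ⟨i.val + 1, by omega⟩).isLt
        have := hne i
        omega⟩ with hF
    have hFinj : Function.Injective F := by
      intro i j hij
      have hij' := congrArg Fin.val hij
      simp only [hF] at hij'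
      have h1i := hne i
      have h1j := hne j
      have : (π ⟨i.val + 1, by omega⟩).val = (π ⟨j.val + 1, by omega⟩).val := by omega
      have := π.injective (Fin.ext this)
      have := congrArg Fin.val this
      simp at this
      exact Fin.ext this
    let σ : Equiv.Perm (Fin (n - 1)) :=
      Equiv.ofBijective F (Finite.injective_iff_bijective.mp hFinj)
    have hσ : ∀ i, σ i = F i := fun i => rfl
    have hS : ∀ i : Fin (n - 1), π ⟨i.val + 1, by omega⟩ = ⟨(σ i).val + 1, by omega⟩ := by
      intro i
      refine Fin.ext ?_
      show (π ⟨i.val + 1, by omega⟩).val = (π ⟨i.val + 1, by omega⟩).val - 1 + 1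
      have := hne i
      omega
    refine ⟨σ, ?_, ?_, ?_, ?_⟩
    · exact fun hcont => ha ((key h1 π σ hd hS p213 hp213).mpr hcont)
    · exact fun hcont => hb ((key h1 π σ hd hS p312 hp312).mpr hcont)
    · exact fun hcont => hc ((keyc h1 (π ^ 2) (σ ^ 2) (sq0 (by omega) π hd)
        (sqS h1 π σ hS) p213 hp213).mpr hcont)
    · apply Equiv.ext
      intro x
      rcases x with ⟨j, hj⟩
      cases j with
      | zero =>
        rw [pc0 h1 σ]
        exact hd
      | succ j =>
        rw [pcS h1 σ ⟨j, by omega⟩]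
        exact hS ⟨j, by omega⟩
  · rintro ⟨σ, ha, hb, hc, rfl⟩
    set ρ := (finCongr h1).permCongr (dsum (1 : Equiv.Perm (Fin 1)) σ) with hρ
    have h0 := pc0 h1 σ
    have hS := pcS h1 σ
    refine ⟨?_, ?_, ?_, h0⟩
    · exact fun hcont => ha ((key h1 ρ σ h0 hS p213 hp213).mp hcont)
    · exact fun hcont => hb ((key h1 ρ σ h0 hS p312 hp312).mp hcont)
    · exact fun hcont => hc ((keyc h1 (ρ ^ 2) (σ ^ 2) (sq0 (by omega) ρ h0)
        (sqS h1 ρ σ hS) p213 hp213).mp hcont)
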